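/- Let S₁, S₂ be positive semidefinite with rank(S₁)+rank(S₂) = 2·rank(S₁+S₂) (equivalently im(S₁)=im(S₂)). Then the limit as σ²→0 of det((S₁+S₂)/2 + σ²I)/sqrt(det(S₁+σ²I)·det(S₂+σ²I)) exists, is finite, and equals 2^{−r}·pdet(S₁+S₂)/sqrt(pdet(S₁)·pdet(S₂)) where r = rank(S₁+S₂). In particular the Bhattacharyya upper bound sqrt(P₁P₂)·e^{−K} with K = (1/2)·log of that ratio does not tend to zero (error floor). -/

import Mathlib

open Matrix Filter

/-- The pseudo-determinant of a Hermitian real matrix: the product of its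
nonzero eigenvalues. -/
noncomputable def pdet {N : ℕ} (S : Matrix (Fin N) (Fin N) ℝ) (h : S.IsHermitian) : ℝ :=
  ∏ i ∈ Finset.univ.filter (fun i => h.eigenvalues i ≠ 0), h.eigenvalues i

lemma det_add_smul_one' {N : ℕ} {S : Matrix (Fin N) (Fin N) ℝ} (hS : S.IsHermitian) (t : ℝ) :
    (S + t • 1).det = ∏ i, (hS.eigenvalues i + t) := by
  have hU : (hS.eigenvectorUnitary : Matrix (Fin N) (Fin N) ℝ) *
      star (hS.eigenvectorUnitary : Matrix (Fin N) (Fin N) ℝ) = 1 :=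
    Matrix.mem_unitaryGroup_iff.mp (hS.eigenvectorUnitary).2
  have hd : diagonal (fun i => hS.eigenvalues i + t) =
      diagonal (RCLike.ofReal ∘ hS.eigenvalues) + t • (1 : Matrix (Fin N) (Fin N) ℝ) := by
    ext i j
    by_cases h : i = j <;> simp [Matrix.diagonal_apply, Matrix.one_apply, h]
  have key : S + t • 1 = (hS.eigenvectorUnitary : Matrix (Fin N) (Fin N) ℝ) *
      (diagonal (fun i => hS.eigenvalues i + t)) *
      star (hS.eigenvectorUnitary : Matrix (Fin N) (Fin N) ℝ) := by
    rw [hd, Matrix.mul_add, Matrix.add_mul, Matrix.mul_smul, Matrix.mul_one, Matrix.smul_mul, hU]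
    conv_lhs => rw [hS.spectral_theorem]
    rfl
  rw [key, Matrix.det_mul_right_comm, hU, Matrix.one_mul, Matrix.det_diagonal]

lemma rank_card' {N : ℕ} {S : Matrix (Fin N) (Fin N) ℝ} (hS : S.IsHermitian) :
    S.rank = (Finset.univ.filter (fun i => hS.eigenvalues i ≠ 0)).card := by
  rw [hS.rank_eq_card_non_zero_eigs, Fintype.card_subtype]

lemma det_split' {N : ℕ} {S : Matrix (Fin N) (Fin N) ℝ} (hS : S.IsHermitian) (t : ℝ) :
    (S + t • 1).det =
      (∏ i ∈ Finset.univ.filter (fun i => hS.eigenvalues i ≠ 0), (hS.eigenvalues i + t)) *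
        t ^ (N - S.rank) := by
  rw [det_add_smul_one' hS t,
    ← Finset.prod_filter_mul_prod_filter_not Finset.univ (fun i => hS.eigenvalues i ≠ 0)]
  congr 1
  have : ∀ i ∈ Finset.univ.filter (fun i => ¬ hS.eigenvalues i ≠ 0),
      hS.eigenvalues i + t = t := by
    intro i hi
    simp only [Finset.mem_filter, not_not] at hi
    rw [hi.2, zero_add]
  rw [Finset.prod_congr rfl this, Finset.prod_const]
  congr 1
  have h1 := Finset.card_filter_add_card_filter_not (s := Finset.univ)
    (p := fun i => hS.eigenvalues i ≠ 0)
  rw [rank_card' hS]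
  simp only [Finset.card_univ, Fintype.card_fin] at h1 ⊢
  omega

lemma pdet_pos' {N : ℕ} {S : Matrix (Fin N) (Fin N) ℝ} (hS : S.PosSemidef) :
    0 < pdet S hS.isHermitian := by
  apply Finset.prod_pos
  intro i hi
  simp only [Finset.mem_filter] at hi
  exact lt_of_le_of_ne (hS.eigenvalues_nonneg i) (Ne.symm hi.2)

theorem stmt_7 (N : ℕ) (S₁ S₂ : Matrix (Fin N) (Fin N) ℝ)
    (h₁ : S₁.PosSemidef) (h₂ : S₂.PosSemidef)
    (hrank : S₁.rank + S₂.rank = 2 * (S₁ + S₂).rank)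
    (P₁ P₂ : ℝ) (hP₁ : 0 < P₁) (hP₂ : 0 < P₂) (hP : P₁ + P₂ = 1) :
    Tendsto
      (fun t : ℝ =>
        ((1 / 2 : ℝ) • (S₁ + S₂) + t • (1 : Matrix (Fin N) (Fin N) ℝ)).det /
          Real.sqrt ((S₁ + t • (1 : Matrix (Fin N) (Fin N) ℝ)).det *
            (S₂ + t • (1 : Matrix (Fin N) (Fin N) ℝ)).det))
      (nhdsWithin 0 (Set.Ioi 0))
      (nhds ((2 : ℝ) ^ (-((S₁ + S₂).rank : ℝ)) *
        (pdet (S₁ + S₂) (h₁.add h₂).isHermitian /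
          Real.sqrt (pdet S₁ h₁.isHermitian * pdet S₂ h₂.isHermitian)))) ∧
    ¬ Tendsto
      (fun t : ℝ =>
        Real.sqrt (P₁ * P₂) *
          Real.exp (-(1 / 2 : ℝ) * Real.log
            (((1 / 2 : ℝ) • (S₁ + S₂) + t • (1 : Matrix (Fin N) (Fin N) ℝ)).det /
              Real.sqrt ((S₁ + t • (1 : Matrix (Fin N) (Fin N) ℝ)).det *
                (S₂ + t • (1 : Matrix (Fin N) (Fin N) ℝ)).det))))
      (nhdsWithin 0 (Set.Ioi 0)) (nhds 0) := by
  classical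
  have hM : (S₁ + S₂).PosSemidef := h₁.add h₂
  set M := S₁ + S₂ with hMdef
  set μ : Fin N → ℝ := hM.isHermitian.eigenvalues with hμ
  set lam : Fin N → ℝ := h₁.isHermitian.eigenvalues with hlam
  set kap : Fin N → ℝ := h₂.isHermitian.eigenvalues with hkap
  set A : Finset (Fin N) := Finset.univ.filter (fun i => μ i ≠ 0) with hA
  set B : Finset (Fin N) := Finset.univ.filter (fun i => lam i ≠ 0) with hB
  set C : Finset (Fin N) := Finset.univ.filter (fun i => kap i ≠ 0) with hC
  set r : ℕ := M.rank with hr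
  set r₁ : ℕ := S₁.rank with hr1
  set r₂ : ℕ := S₂.rank with hr2
  set k : ℕ := N - r with hk
  have hr1N : r₁ ≤ N := Matrix.rank_le_width S₁
  have hr2N : r₂ ≤ N := Matrix.rank_le_width S₂
  have hrN : r ≤ N := Matrix.rank_le_width M
  set QA : ℝ → ℝ := fun t => ∏ i ∈ A, (μ i + 2 * t) with hQA
  set QB : ℝ → ℝ := fun t => ∏ i ∈ B, (lam i + t) with hQB
  set QC : ℝ → ℝ := fun t => ∏ i ∈ C, (kap i + t) with hQC
  set g : ℝ → ℝ := fun t => ((2 : ℝ) ^ r)⁻¹ * (QA t / Real.sqrt (QB t * QC t)) with hg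
  have hgapp : ∀ t : ℝ, g t = ((2 : ℝ) ^ r)⁻¹ * (QA t / Real.sqrt (QB t * QC t)) :=
    fun t => rfl
  -- positivity of the partial products
  have hBpos : ∀ t : ℝ, 0 ≤ t → 0 < QB t := by
    intro t ht
    apply Finset.prod_pos
    intro i hi
    simp only [hB, Finset.mem_filter] at hi
    have := lt_of_le_of_ne (h₁.eigenvalues_nonneg i) (Ne.symm hi.2)
    linarith
  have hCpos : ∀ t : ℝ, 0 ≤ t → 0 < QC t := by
    intro t ht
    apply Finset.prod_pos
    intro i hi
    simp only [hC, Finset.mem_filter] at hi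
    have := lt_of_le_of_ne (h₂.eigenvalues_nonneg i) (Ne.symm hi.2)
    linarith
  have hApos : ∀ t : ℝ, 0 ≤ t → 0 < QA t := by
    intro t ht
    apply Finset.prod_pos
    intro i hi
    simp only [hA, Finset.mem_filter] at hi
    have := lt_of_le_of_ne (hM.eigenvalues_nonneg i) (Ne.symm hi.2)
    linarith
  -- value at 0
  have hQA0 : QA 0 = pdet M hM.isHermitian := by
    simp [hQA, pdet, hA, hμ]
  have hQB0 : QB 0 = pdet S₁ h₁.isHermitian := by
    simp [hQB, pdet, hB, hlam]
  have hQC0 : QC 0 = pdet S₂ h₂.isHermitian := by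
    simp [hQC, pdet, hC, hkap]
  have hg0 : g 0 = (2 : ℝ) ^ (-(r : ℝ)) *
      (pdet M (h₁.add h₂).isHermitian /
        Real.sqrt (pdet S₁ h₁.isHermitian * pdet S₂ h₂.isHermitian)) := by
    have h2 : (2 : ℝ) ^ (-(r : ℝ)) = ((2 : ℝ) ^ r)⁻¹ := by
      rw [← Real.rpow_natCast 2 r, ← Real.rpow_neg (by norm_num)]
    rw [hgapp, h2, hQA0, hQB0, hQC0]
  -- continuity
  have hcQA : Continuous QA := by
    apply continuous_finset_prod
    intro i _
    fun_prop
  have hcQB : Continuous QB := by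
    apply continuous_finset_prod
    intro i _
    fun_prop
  have hcQC : Continuous QC := by
    apply continuous_finset_prod
    intro i _
    fun_prop
  have hdenpos : 0 < Real.sqrt (QB 0 * QC 0) :=
    Real.sqrt_pos.mpr (mul_pos (hBpos 0 le_rfl) (hCpos 0 le_rfl))
  have hgc : ContinuousAt g 0 := by
    apply ContinuousAt.mul continuousAt_const
    exact hcQA.continuousAt.div (Real.continuous_sqrt.comp (hcQB.mul hcQC)).continuousAt
      hdenpos.ne'
  have htg : Tendsto g (nhdsWithin 0 (Set.Ioi 0)) (nhds (g 0)) :=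
    hgc.continuousWithinAt
  -- eventual equality
  have heq : g =ᶠ[nhdsWithin 0 (Set.Ioi 0)]
      fun t : ℝ =>
        ((1 / 2 : ℝ) • M + t • (1 : Matrix (Fin N) (Fin N) ℝ)).det /
          Real.sqrt ((S₁ + t • (1 : Matrix (Fin N) (Fin N) ℝ)).det *
            (S₂ + t • (1 : Matrix (Fin N) (Fin N) ℝ)).det) := by
    filter_upwards [self_mem_nhdsWithin] with t ht
    have ht0 : (0 : ℝ) < t := ht
    have hnum : ((1 / 2 : ℝ) • M + t • (1 : Matrix (Fin N) (Fin N) ℝ)).det =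
        ((2 : ℝ) ^ r)⁻¹ * (QA t * t ^ k) := by
      have h12 : (1 / 2 : ℝ) • M + t • (1 : Matrix (Fin N) (Fin N) ℝ) =
          (2⁻¹ : ℝ) • (M + (2 * t) • (1 : Matrix (Fin N) (Fin N) ℝ)) := by
        rw [hMdef]
        module
      rw [h12, Matrix.det_smul, det_split' hM.isHermitian (2 * t)]
      have hp : (2 : ℝ)⁻¹ ^ N * (2 : ℝ) ^ k = ((2 : ℝ) ^ r)⁻¹ := by
        have hN : (2 : ℝ) ^ N = (2 : ℝ) ^ r * (2 : ℝ) ^ k := by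
          rw [← pow_add]
          congr 1
          omega
        rw [inv_pow, hN]
        field_simp
      simp only [Fintype.card_fin, mul_pow]
      rw [← hr, ← hk, ← hp]
      have hfold : (∏ i ∈ Finset.univ.filter (fun i => hM.isHermitian.eigenvalues i ≠ 0),
          (hM.isHermitian.eigenvalues i + 2 * t)) = QA t := rfl
      rw [hfold]
      ring
    have hden : Real.sqrt ((S₁ + t • (1 : Matrix (Fin N) (Fin N) ℝ)).det *
        (S₂ + t • (1 : Matrix (Fin N) (Fin N) ℝ)).det) =
        Real.sqrt (QB t * QC t) * t ^ k := by
      rw [det_split' h₁.isHermitian t, det_split' h₂.isHermitian t]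
      have hfoldB : (∏ i ∈ Finset.univ.filter (fun i => h₁.isHermitian.eigenvalues i ≠ 0),
          (h₁.isHermitian.eigenvalues i + t)) = QB t := rfl
      have hfoldC : (∏ i ∈ Finset.univ.filter (fun i => h₂.isHermitian.eigenvalues i ≠ 0),
          (h₂.isHermitian.eigenvalues i + t)) = QC t := rfl
      rw [hfoldB, hfoldC, ← hr1, ← hr2]
      have hexp : (N - r₁) + (N - r₂) = k * 2 := by omega
      have harr : (QB t * t ^ (N - r₁)) * (QC t * t ^ (N - r₂)) =
          (QB t * QC t) * (t ^ k) ^ 2 := by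
        rw [← pow_mul, ← hexp, pow_add]
        ring
      rw [harr, Real.sqrt_mul (mul_pos (hBpos t ht0.le) (hCpos t ht0.le)).le,
        Real.sqrt_sq (pow_nonneg ht0.le k)]
    rw [hgapp, hnum, hden]
    have htk : (t : ℝ) ^ k ≠ 0 := pow_ne_zero _ ht0.ne'
    have hs : Real.sqrt (QB t * QC t) ≠ 0 :=
      (Real.sqrt_pos.mpr (mul_pos (hBpos t ht0.le) (hCpos t ht0.le))).ne'
    field_simp
  have hconj1 : Tendsto
      (fun t : ℝ =>
        ((1 / 2 : ℝ) • M + t • (1 : Matrix (Fin N) (Fin N) ℝ)).det /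
          Real.sqrt ((S₁ + t • (1 : Matrix (Fin N) (Fin N) ℝ)).det *
            (S₂ + t • (1 : Matrix (Fin N) (Fin N) ℝ)).det))
      (nhdsWithin 0 (Set.Ioi 0))
      (nhds ((2 : ℝ) ^ (-(r : ℝ)) *
        (pdet M (h₁.add h₂).isHermitian /
          Real.sqrt (pdet S₁ h₁.isHermitian * pdet S₂ h₂.isHermitian)))) := by
    rw [← hg0]
    exact htg.congr' heq
  refine ⟨hconj1, ?_⟩
  -- second part
  intro hcon
  have hLpos : 0 < (2 : ℝ) ^ (-(r : ℝ)) *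
      (pdet M (h₁.add h₂).isHermitian /
        Real.sqrt (pdet S₁ h₁.isHermitian * pdet S₂ h₂.isHermitian)) := by
    have p1 := pdet_pos' h₁
    have p2 := pdet_pos' h₂
    have pM := pdet_pos' hM
    have : 0 < Real.sqrt (pdet S₁ h₁.isHermitian * pdet S₂ h₂.isHermitian) :=
      Real.sqrt_pos.mpr (mul_pos p1 p2)
    have h2p : (0:ℝ) < (2 : ℝ) ^ (-(r : ℝ)) := Real.rpow_pos_of_pos (by norm_num) _
    positivity
  have hlog : Tendsto
      (fun t : ℝ => Real.log
        (((1 / 2 : ℝ) • M + t • (1 : Matrix (Fin N) (Fin N) ℝ)).det /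
          Real.sqrt ((S₁ + t • (1 : Matrix (Fin N) (Fin N) ℝ)).det *
            (S₂ + t • (1 : Matrix (Fin N) (Fin N) ℝ)).det)))
      (nhdsWithin 0 (Set.Ioi 0)) (nhds (Real.log ((2 : ℝ) ^ (-(r : ℝ)) *
        (pdet M (h₁.add h₂).isHermitian /
          Real.sqrt (pdet S₁ h₁.isHermitian * pdet S₂ h₂.isHermitian))))) :=
    hconj1.log hLpos.ne'
  have hB2 : Tendsto
      (fun t : ℝ =>
        Real.sqrt (P₁ * P₂) *
          Real.exp (-(1 / 2 : ℝ) * Real.log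
            (((1 / 2 : ℝ) • M + t • (1 : Matrix (Fin N) (Fin N) ℝ)).det /
              Real.sqrt ((S₁ + t • (1 : Matrix (Fin N) (Fin N) ℝ)).det *
                (S₂ + t • (1 : Matrix (Fin N) (Fin N) ℝ)).det))))
      (nhdsWithin 0 (Set.Ioi 0))
      (nhds (Real.sqrt (P₁ * P₂) *
        Real.exp (-(1 / 2 : ℝ) * Real.log ((2 : ℝ) ^ (-(r : ℝ)) *
          (pdet M (h₁.add h₂).isHermitian /
            Real.sqrt (pdet S₁ h₁.isHermitian * pdet S₂ h₂.isHermitian)))))) :=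
    tendsto_const_nhds.mul ((hlog.const_mul (-(1 / 2 : ℝ))).rexp)
  have hzero := tendsto_nhds_unique hcon hB2
  have : 0 < Real.sqrt (P₁ * P₂) * Real.exp (-(1 / 2 : ℝ) * Real.log ((2 : ℝ) ^ (-(r : ℝ)) *
      (pdet M (h₁.add h₂).isHermitian /
        Real.sqrt (pdet S₁ h₁.isHermitian * pdet S₂ h₂.isHermitian)))) := by
    have := Real.exp_pos (-(1 / 2 : ℝ) * Real.log ((2 : ℝ) ^ (-(r : ℝ)) *
      (pdet M (h₁.add h₂).isHermitian /
        Real.sqrt (pdet S₁ h₁.isHermitian * pdet S₂ h₂.isHermitian))))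
    have hsp : 0 < Real.sqrt (P₁ * P₂) := Real.sqrt_pos.mpr (mul_pos hP₁ hP₂)
    positivity
  linarith [hzero, this]
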